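/- Let 1 → N → G → Q → 1 be a short exact sequence of groups. The conjugation action of G on N induces a homomorphism Q → Out(N), and if the center Z(N) is trivial, then the short exact sequence can be reconstructed from this outer action: G is isomorphic to the fiber product Aut(N) ×_{Out(N)} Q. -/

import Mathlib

/-- The inner automorphisms form a normal subgroup of `MulAut N`. -/
instance innRangeNormal (N : Type*) [Group N] :
    (MulAut.conj (G := N)).range.Normal := by
  constructor
  rintro _ ⟨n, rfl⟩ f
  refine ⟨f n, ?_⟩
  ext m
  simp [MulAut.conj_apply, map_mul, map_inv, mul_assoc]

/-- The outer automorphism group `Out N = Aut N / Inn N`. -/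
def Out (N : Type*) [Group N] :=
  MulAut N ⧸ (MulAut.conj (G := N)).range

instance (N : Type*) [Group N] : Group (Out N) :=
  inferInstanceAs (Group (MulAut N ⧸ (MulAut.conj (G := N)).range))

/-- The natural projection `Aut N → Out N`. -/
def Out.mk (N : Type*) [Group N] : MulAut N →* Out N :=
  QuotientGroup.mk' _

/-- given a short exact sequence `1 → N → G → Q → 1` (encoded by a
normal subgroup `N ⊴ G` with `Q = G ⧸ N`), conjugation induces a homomorphism
`ρ : Q → Out N` compatible with the conjugation action `G → Aut N`, and if
`Z(N) = 1` then `G` is isomorphic to the fiber product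
`Aut N ×_{Out N} Q` of `Aut N → Out N` and `ρ : Q → Out N`. -/
theorem ses_reconstruction_from_outer_action
    {G : Type*} [Group G] (N : Subgroup G) [N.Normal]
    (hZ : Subgroup.center ↥N = ⊥) :
    ∃ ρ : G ⧸ N →* Out ↥N,
      (∀ g : G, ρ (QuotientGroup.mk g) = Out.mk ↥N (MulAut.conjNormal g)) ∧
      Nonempty (G ≃*
        ↥(MonoidHom.eqLocus
            ((Out.mk ↥N).comp (MonoidHom.fst (MulAut ↥N) (G ⧸ N)))
            (ρ.comp (MonoidHom.snd (MulAut ↥N) (G ⧸ N))))) := by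
  have hker : ∀ n ∈ N, ((Out.mk ↥N).comp (MulAut.conjNormal (H := N))) n = 1 := by
    intro n hn
    have : MulAut.conjNormal (H := N) n = MulAut.conj (⟨n, hn⟩ : N) :=
      MulAut.conjNormal_val (h := ⟨n, hn⟩)
    simp only [MonoidHom.comp_apply, this, Out.mk]
    exact (QuotientGroup.eq_one_iff _).mpr ⟨⟨n, hn⟩, this.symm⟩
  refine ⟨QuotientGroup.lift N _ hker, fun g => rfl, ?_⟩
  set ρ := QuotientGroup.lift N _ hker
  have hcompat : ∀ g : G,
      ((Out.mk ↥N).comp (MonoidHom.fst (MulAut ↥N) (G ⧸ N)))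
        ((MulAut.conjNormal g, (QuotientGroup.mk g : G ⧸ N))) =
      (ρ.comp (MonoidHom.snd (MulAut ↥N) (G ⧸ N)))
        ((MulAut.conjNormal g, (QuotientGroup.mk g : G ⧸ N))) := fun g => rfl
  let φ : G →* ↥(MonoidHom.eqLocus
      ((Out.mk ↥N).comp (MonoidHom.fst (MulAut ↥N) (G ⧸ N)))
      (ρ.comp (MonoidHom.snd (MulAut ↥N) (G ⧸ N)))) :=
    ((MulAut.conjNormal (H := N)).prod (QuotientGroup.mk' N)).codRestrict _
      (fun g => hcompat g)
  have hinj : Function.Injective φ := by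
    rw [← MonoidHom.ker_eq_bot_iff]
    rw [Subgroup.eq_bot_iff_forall]
    intro g hg
    have h1 : MulAut.conjNormal (H := N) g = 1 := congrArg (Prod.fst ∘ Subtype.val) hg
    have h2 : (QuotientGroup.mk g : G ⧸ N) = 1 := congrArg (Prod.snd ∘ Subtype.val) hg
    have hgN : g ∈ N := (QuotientGroup.eq_one_iff g).mp h2
    have hc : (⟨g, hgN⟩ : N) ∈ Subgroup.center ↥N := by
      rw [Subgroup.mem_center_iff]
      intro m
      have := congrArg (fun f : MulAut ↥N => (f m : G)) h1
      simp only [MulAut.conjNormal_apply, MulAut.one_apply] at this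
      have : g * (m : G) * g⁻¹ = m := this
      ext
      push_cast
      exact (mul_inv_eq_iff_eq_mul.mp this).symm
    rw [hZ, Subgroup.mem_bot] at hc
    simpa using congrArg Subtype.val hc
  have hsurj : Function.Surjective φ := by
    rintro ⟨⟨f, q⟩, hfq⟩
    obtain ⟨g, rfl⟩ := QuotientGroup.mk_surjective q
    have : Out.mk ↥N f = Out.mk ↥N (MulAut.conjNormal g) := hfq
    obtain ⟨z, ⟨n, hn⟩, hz⟩ := (QuotientGroup.mk'_eq_mk' _).mp this
    refine ⟨g * (n : G)⁻¹, ?_⟩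
    apply Subtype.ext
    apply Prod.ext
    · show MulAut.conjNormal (g * (n : G)⁻¹) = f
      rw [map_mul, ← hz, ← hn, map_inv, MulAut.conjNormal_val]
      group
    · show (QuotientGroup.mk (g * (n : G)⁻¹) : G ⧸ N) = QuotientGroup.mk g
      rw [QuotientGroup.eq]
      simp [mul_assoc, n.2]
  exact ⟨MulEquiv.ofBijective φ ⟨hinj, hsurj⟩⟩
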